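/- Let q_k > 0 be summable with Σ_k q_k = q̄, let a > 0, β > 0, and define F(x) = Σ_k x_k (log(x_k/q_k) − 1) + q̄ + (aβ/2)(Σ_k x_k)² for x ∈ ℓ¹(ℝ₊) (and F = +∞ otherwise). Then F has a unique minimiser ξ ∈ ℓ¹(ℝ₊) given by ξ_k = (W₀(aβq̄)/(aβq̄)) q_k, where W₀ is the principal Lambert W branch. -/
import Mathlib
set_option maxHeartbeats 1000000

open scoped ENNReal Classical

noncomputable def lambertW0 (y : ℝ) : ℝ :=
  Function.invFunOn (fun w : ℝ => w * Real.exp w) (Set.Ici (-1)) y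

noncomputable def Fcmf (q : ℕ → ℝ) (a β : ℝ) (x : lp (fun _ : ℕ => ℝ) 1) : ℝ≥0∞ :=
  if ∀ k : ℕ, 0 ≤ x k then
    (∑' k : ℕ, ENNReal.ofReal (x k * (Real.log (x k / q k) - 1) + q k))
      + ENNReal.ofReal (a * β / 2 * (∑' k : ℕ, x k) ^ 2)
  else ⊤

lemma lambertW0_spec {y : ℝ} (hy : 0 < y) :
    lambertW0 y * Real.exp (lambertW0 y) = y ∧ 0 < lambertW0 y := by
  have hex : ∃ w ∈ Set.Ici (-1 : ℝ), w * Real.exp w = y := by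
    have hcont : ContinuousOn (fun w : ℝ => w * Real.exp w) (Set.Icc 0 y) :=
      (continuous_id.mul Real.continuous_exp).continuousOn
    have h1 : (1:ℝ) ≤ Real.exp y := by
      have := Real.add_one_le_exp y; linarith
    have hmem : y ∈ Set.Icc ((0:ℝ) * Real.exp 0) (y * Real.exp y) := by
      constructor
      · simp [hy.le]
      · nlinarith
    obtain ⟨w, hw, hwy⟩ := intermediate_value_Icc hy.le hcont hmem
    exact ⟨w, le_trans (by norm_num) hw.1, hwy⟩
  have h1 : (fun w : ℝ => w * Real.exp w) (lambertW0 y) = y :=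
    Function.invFunOn_eq hex
  have h2 : lambertW0 y ∈ Set.Ici (-1 : ℝ) := Function.invFunOn_mem hex
  refine ⟨h1, ?_⟩
  by_contra h
  push_neg at h
  have hE := Real.exp_pos (lambertW0 y)
  simp only at h1
  nlinarith [h1]

lemma point_le (qk W t : ℝ) (hqk : 0 < qk) (ht : 0 ≤ t) :
    qk - Real.exp (-W) * qk - W * t ≤ t * (Real.log (t / qk) - 1) + qk := by
  rcases eq_or_lt_of_le ht with h0 | h0
  · have hE := Real.exp_pos (-W)
    rw [← h0]; nlinarith
  · set ξ : ℝ := Real.exp (-W) * qk with hξ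
    have hξ0 : 0 < ξ := by positivity
    have hlog : Real.log (t / qk) = Real.log (t / ξ) - W := by
      rw [Real.log_div h0.ne' hqk.ne', Real.log_div h0.ne' hξ0.ne', hξ,
        Real.log_mul (Real.exp_ne_zero _) hqk.ne', Real.log_exp]
      ring
    have hkey : Real.log (ξ / t) ≤ ξ / t - 1 := Real.log_le_sub_one_of_pos (by positivity)
    have hinv : Real.log (ξ / t) = - Real.log (t / ξ) := by
      rw [← Real.log_inv]; congr 1; field_simp
    have hdc : ξ / t * t = ξ := div_mul_cancel₀ _ h0.ne'
    rw [hlog]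
    nlinarith [hkey, hinv]

lemma point_lt (qk W t : ℝ) (hqk : 0 < qk) (ht : 0 ≤ t) (hne : t ≠ Real.exp (-W) * qk) :
    qk - Real.exp (-W) * qk - W * t < t * (Real.log (t / qk) - 1) + qk := by
  rcases eq_or_lt_of_le ht with h0 | h0
  · have hE : 0 < Real.exp (-W) * qk := by positivity
    rw [← h0]; simp; nlinarith
  · set ξ : ℝ := Real.exp (-W) * qk with hξ
    have hξ0 : 0 < ξ := by positivity
    have hlog : Real.log (t / qk) = Real.log (t / ξ) - W := by
      rw [Real.log_div h0.ne' hqk.ne', Real.log_div h0.ne' hξ0.ne', hξ,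
        Real.log_mul (Real.exp_ne_zero _) hqk.ne', Real.log_exp]
      ring
    have hkey : Real.log (ξ / t) < ξ / t - 1 := by
      refine Real.log_lt_sub_one_of_pos (by positivity) ?_
      intro h
      apply hne
      field_simp at h
      linarith
    have hinv : Real.log (ξ / t) = - Real.log (t / ξ) := by
      rw [← Real.log_inv]; congr 1; field_simp
    have hdc : ξ / t * t = ξ := div_mul_cancel₀ _ h0.ne'
    rw [hlog]
    nlinarith [hkey, hinv]

lemma term_nonneg (qk t : ℝ) (hqk : 0 < qk) (ht : 0 ≤ t) :
    0 ≤ t * (Real.log (t / qk) - 1) + qk := by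
  have := point_le qk 0 t hqk ht
  simp at this
  linarith

/-- For summable positive `q` with `q̄ = ∑ₖ q k`, and `a, β > 0`, the CMF rate function
has a unique minimiser `ξ`, given by `ξ k = (W₀(aβq̄)/(aβq̄)) q k`. -/
theorem stmt19 (q : ℕ → ℝ) (a β : ℝ) (hq : ∀ k, 0 < q k) (hqs : Summable q)
    (ha : 0 < a) (hβ : 0 < β) :
    ∃ ξ : lp (fun _ : ℕ => ℝ) 1,
      (∀ k : ℕ, ξ k =
        (lambertW0 (a * β * (∑' j : ℕ, q j)) / (a * β * (∑' j : ℕ, q j))) * q k) ∧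
      (∀ x : lp (fun _ : ℕ => ℝ) 1, x ≠ ξ → Fcmf q a β ξ < Fcmf q a β x) := by
  have hqbar : 0 < ∑' j, q j :=
    lt_of_lt_of_le (hq 0) (Summable.le_tsum hqs 0 fun j _ => (hq j).le)
  set qbar : ℝ := ∑' j, q j with hqbardef
  clear_value qbar
  have hy : 0 < a * β * qbar := by positivity
  obtain ⟨hWy, hW⟩ := lambertW0_spec hy
  set W : ℝ := lambertW0 (a * β * qbar) with hWdef
  clear_value W
  have hc : 0 < Real.exp (-W) := Real.exp_pos _
  have hc1 : Real.exp (-W) * Real.exp W = 1 := by rw [← Real.exp_add]; simp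
  have hWyc : W / (a * β * qbar) = Real.exp (-W) := by
    rw [← hWy, Real.exp_neg]
    field_simp
  set ξf : ℕ → ℝ := fun k => Real.exp (-W) * q k with hξf
  clear_value ξf
  have hξfk : ∀ k, ξf k = Real.exp (-W) * q k := fun k => by rw [hξf]
  have hξfpos : ∀ k, 0 < ξf k := fun k => (hξfk k) ▸ mul_pos hc (hq k)
  have hξfs : Summable ξf := by rw [hξf]; exact hqs.mul_left _
  have hξmem : Memℓp ξf 1 := by
    rw [memℓp_gen_iff (by norm_num : (0:ℝ) < (1:ℝ≥0∞).toReal)]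
    refine hξfs.congr fun k => ?_
    simp [hξf, Real.norm_of_nonneg (le_of_lt (mul_pos hc (hq k)))]
  set ξ : lp (fun _ : ℕ => ℝ) 1 := ⟨ξf, hξmem⟩ with hξdef
  have hξapp : ∀ k, ξ k = ξf k := fun _ => rfl
  clear_value ξ
  refine ⟨ξ, fun k => by rw [hξapp, hξfk, hWyc], ?_⟩
  -- value of F at ξ
  set D : ℝ := 1 - Real.exp (-W) * (W + 1) with hDdef
  clear_value D
  have hTξ : ∀ k, ξf k * (Real.log (ξf k / q k) - 1) + q k = D * q k := by
    intro k
    have h1 : ξf k / q k = Real.exp (-W) := by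
      rw [hξfk]
      exact mul_div_cancel_right₀ _ (hq k).ne'
    rw [h1, Real.log_exp, hξfk, hDdef]
    ring
  have hD : 0 ≤ D := by
    have h0 := (hTξ 0) ▸ term_nonneg (q 0) (ξf 0) (hq 0) (hξfpos 0).le
    nlinarith [hq 0]
  have hξsum : ∑' k, ξf k = Real.exp (-W) * qbar := by
    rw [hξf, tsum_mul_left, ← hqbardef]
  set s₀ : ℝ := Real.exp (-W) * qbar with hs₀def
  clear_value s₀
  have hWs₀ : a * β * s₀ = W := by
    have h1 : a * β * s₀ = Real.exp (-W) * (a * β * qbar) := by rw [hs₀def]; ring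
    rw [h1, ← hWy]
    nlinarith [hc1]
  have hξpos : ∀ k, 0 ≤ ξ k := fun k => by rw [hξapp]; exact (hξfpos k).le
  have hFξ : Fcmf q a β ξ = ENNReal.ofReal (D * qbar + a * β / 2 * s₀ ^ 2) := by
    simp only [Fcmf, if_pos hξpos]
    have e1 : ∀ k : ℕ, ENNReal.ofReal (ξ k * (Real.log (ξ k / q k) - 1) + q k)
        = ENNReal.ofReal (D * q k) := fun k => by rw [hξapp, hTξ k]
    rw [tsum_congr e1, ← ENNReal.ofReal_tsum_of_nonneg
        (fun k => mul_nonneg hD (hq k).le) (hqs.mul_left D), tsum_mul_left,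
      show (∑' k : ℕ, (ξ : ∀ _ : ℕ, ℝ) k) = s₀ from (tsum_congr fun k => hξapp k).trans hξsum,
      ← hqbardef, ← ENNReal.ofReal_add (mul_nonneg hD hqbar.le) (by positivity)]
  have hFξtop : Fcmf q a β ξ < ⊤ := by
    rw [hFξ]; exact ENNReal.ofReal_lt_top
  intro x hx
  by_cases hpos : ∀ k, 0 ≤ x k
  · -- x is in the nonnegative cone
    have hxs : Summable (fun k => (x k : ℝ)) := by
      have h := (memℓp_gen_iff (p := 1) (by norm_num : (0:ℝ) < (1:ℝ≥0∞).toReal)).1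
        (lp.memℓp x)
      refine h.congr fun k => ?_
      simp [Real.norm_of_nonneg (hpos k)]
    have hTxnn : ∀ k, 0 ≤ x k * (Real.log (x k / q k) - 1) + q k :=
      fun k => term_nonneg (q k) (x k) (hq k) (hpos k)
    by_cases hTxs : Summable (fun k => x k * (Real.log (x k / q k) - 1) + q k)
    · -- summable case: real comparison
      set sx : ℝ := ∑' k, (x k : ℝ) with hsxdef
      clear_value sx
      obtain ⟨k₀, hk₀⟩ : ∃ k, (x k : ℝ) ≠ ξf k := by
        by_contra h
        push_neg at h
        exact hx (lp.ext (funext fun k => (h k).trans (hξapp k).symm))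
      have hpt : ∀ k, D * q k + W * ξf k
          ≤ x k * (Real.log (x k / q k) - 1) + q k + W * x k := by
        intro k
        have h1 := point_le (q k) W (x k) (hq k) (hpos k)
        have h2 : D * q k + W * ξf k = q k - Real.exp (-W) * q k := by
          simp only [hξf, hDdef]; ring
        linarith
      have hptk : D * q k₀ + W * ξf k₀
          < x k₀ * (Real.log (x k₀ / q k₀) - 1) + q k₀ + W * x k₀ := by
        have h1 := point_lt (q k₀) W (x k₀) (hq k₀) (hpos k₀) (by simp only [hξf] at hk₀; exact hk₀)
        have h2 : D * q k₀ + W * ξf k₀ = q k₀ - Real.exp (-W) * q k₀ := by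
          simp only [hξf, hDdef]; ring
        linarith
      have hf0 : ∀ k, 0 ≤ D * q k + W * ξf k := fun k =>
        add_nonneg (mul_nonneg hD (hq k).le) (mul_nonneg hW.le (hξfpos k).le)
      have hgs : Summable (fun k => x k * (Real.log (x k / q k) - 1) + q k + W * x k) :=
        hTxs.add (hxs.mul_left W)
      have hsum_lt : (∑' k, (D * q k + W * ξf k))
          < ∑' k, (x k * (Real.log (x k / q k) - 1) + q k + W * x k) :=
        Summable.tsum_lt_tsum_of_nonneg hf0 hpt hptk hgs
      have hLHS : (∑' k, (D * q k + W * ξf k)) = D * qbar + W * s₀ := by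
        rw [Summable.tsum_add (hqs.mul_left D) (hξfs.mul_left W), tsum_mul_left, tsum_mul_left,
          hξsum, ← hqbardef]
      have hRHS : (∑' k, (x k * (Real.log (x k / q k) - 1) + q k + W * x k))
          = (∑' k, (x k * (Real.log (x k / q k) - 1) + q k)) + W * sx := by
        rw [Summable.tsum_add hTxs (hxs.mul_left W), tsum_mul_left, ← hsxdef]
      have hsq : a * β / 2 * s₀ ^ 2 - W * s₀ ≤ a * β / 2 * sx ^ 2 - W * sx := by
        rw [← hWs₀]
        nlinarith [mul_nonneg (mul_pos ha hβ).le (sq_nonneg (sx - s₀))]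
      have hreal : D * qbar + a * β / 2 * s₀ ^ 2
          < (∑' k, (x k * (Real.log (x k / q k) - 1) + q k)) + a * β / 2 * sx ^ 2 := by
        rw [hLHS, hRHS] at hsum_lt
        linarith
      have hFx : Fcmf q a β x
          = ENNReal.ofReal
            ((∑' k, (x k * (Real.log (x k / q k) - 1) + q k)) + a * β / 2 * sx ^ 2) := by
        simp only [Fcmf, if_pos hpos]
        rw [← ENNReal.ofReal_tsum_of_nonneg hTxnn hTxs,
          ← ENNReal.ofReal_add (tsum_nonneg hTxnn) (by positivity), ← hsxdef]
      rw [hFξ, hFx]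
      exact (ENNReal.ofReal_lt_ofReal_iff_of_nonneg
        (add_nonneg (mul_nonneg hD hqbar.le) (by positivity))).2 hreal
    · -- non-summable case : Fcmf x = ⊤
      have htop : (∑' k, ENNReal.ofReal (x k * (Real.log (x k / q k) - 1) + q k)) = ⊤ := by
        by_contra h
        exact hTxs ((ENNReal.summable_toReal h).congr fun k =>
          ENNReal.toReal_ofReal (hTxnn k))
      have hFx : Fcmf q a β x = ⊤ := by
        simp only [Fcmf, if_pos hpos, htop]
        exact top_add _
      rw [hFx]; exact hFξtop
  · have hFx : Fcmf q a β x = ⊤ := by simp only [Fcmf, if_neg hpos]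
    rw [hFx]; exact hFξtop
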